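/- arXiv:2310.20522 — 3 statements merged into one kernel-verified Lean document; each statement's English description precedes it below -/
import Mathlib

section
/- Let f : ℝ₊ → ℝ₊ be a non-decreasing function and let 𝒳 be a monotone class of graphs with |𝒳ₙ| ≤ 2^{C·n·f(n)} for all n, for some constant C ≥ 1. Then 𝒳 admits an adjacency labeling scheme of size (2C·f(n) + 1)·⌈log₂ n⌉; in particular, 𝒳 admits an O(f(n)·log n)-bit adjacency labeling scheme. -/
open Real

/-- A graph class: for each `n`, the set of its member graphs with vertex set `Fin n`. -/
abbrev GraphClass := (n : ℕ) → Set (SimpleGraph (Fin n))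

/-- `H` is (isomorphic to) a subgraph of `G`: there is an injective map of the vertices
of `H` into the vertices of `G` sending edges to edges. -/
def IsSubgraphOf {m n : ℕ} (H : SimpleGraph (Fin m)) (G : SimpleGraph (Fin n)) : Prop :=
  ∃ f : Fin m ↪ Fin n, ∀ u v : Fin m, H.Adj u v → G.Adj (f u) (f v)

/-- A graph class is monotone if it is closed under taking subgraphs. -/
def MonotoneGraphClass (𝒳 : GraphClass) : Prop :=
  ∀ {m n : ℕ} (H : SimpleGraph (Fin m)) (G : SimpleGraph (Fin n)),
    G ∈ 𝒳 n → IsSubgraphOf H G → H ∈ 𝒳 m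

/-- `𝒳` admits a `b n`-bit adjacency labeling scheme: there is a decoder `D` such that every
`n`-vertex graph in `𝒳` has a labeling of its vertices by binary strings of length `b n`
from which `D` decodes adjacency. -/
def HasScheme (𝒳 : GraphClass) (b : ℕ → ℕ) : Prop :=
  ∃ D : List Bool → List Bool → Bool,
    ∀ n : ℕ, ∀ G ∈ 𝒳 n, ∃ ℓ : Fin n → List Bool,
      (∀ v, (ℓ v).length = b n) ∧
      ∀ u v : Fin n, u ≠ v → (D (ℓ u) (ℓ v) = true ↔ G.Adj u v)

/-- `𝒳` admits an adjacency labeling scheme of size at most `b n` (a real-valued bound):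
there is a decoder `D` such that every `n`-vertex graph in `𝒳` has a labeling of its
vertices by binary strings of length at most `b n` from which `D` decodes adjacency. -/
def HasSchemeLe (𝒳 : GraphClass) (b : ℕ → ℝ) : Prop :=
  ∃ D : List Bool → List Bool → Bool,
    ∀ n : ℕ, ∀ G ∈ 𝒳 n, ∃ ℓ : Fin n → List Bool,
      (∀ v, ((ℓ v).length : ℝ) ≤ b n) ∧
      ∀ u v : Fin n, u ≠ v → (D (ℓ u) (ℓ v) = true ↔ G.Adj u v)


section Aux

/-- Write `x` in binary, little-endian, in exactly `L` bits. -/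
def bitsOf : ℕ → ℕ → List Bool
  | 0, _ => []
  | L + 1, x => (x % 2 == 1) :: bitsOf L (x / 2)

/-- Value of a little-endian bit list. -/
def valOf : List Bool → ℕ
  | [] => 0
  | b :: l => (if b then 1 else 0) + 2 * valOf l

@[simp] lemma bitsOf_length (L x : ℕ) : (bitsOf L x).length = L := by
  induction L generalizing x with
  | zero => rfl
  | succ L ih => simp [bitsOf, ih]

lemma valOf_bitsOf {L x : ℕ} (h : x < 2 ^ L) : valOf (bitsOf L x) = x := by
  induction L generalizing x with
  | zero => simp at h; simp [h, bitsOf, valOf]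
  | succ L ih =>
    have h2 : x / 2 < 2 ^ L := by
      rw [Nat.div_lt_iff_lt_mul (by norm_num)]
      calc x < 2 ^ (L + 1) := h
        _ = 2 ^ L * 2 := by ring
    have := ih h2
    simp only [bitsOf, valOf, this]
    rcases Nat.mod_two_eq_zero_or_one x with h0 | h0 <;>
      simp [h0] <;> omega

/-- Split a bit list into blocks of size `L+1` and take values. -/
def idsOf (L : ℕ) : List Bool → List ℕ
  | [] => []
  | a :: rest => valOf ((a :: rest).take (L + 1)) :: idsOf L ((a :: rest).drop (L + 1))
termination_by a => a.length
decreasing_by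
  simp only [List.length_drop, List.length_cons]
  omega

lemma idsOf_nil (L : ℕ) : idsOf L [] = [] := by simp [idsOf]

lemma idsOf_cons (L : ℕ) (a : List Bool) (ha : a ≠ []) :
    idsOf L a = valOf (a.take (L + 1)) :: idsOf L (a.drop (L + 1)) := by
  cases a with
  | nil => exact absurd rfl ha
  | cons x xs => rw [idsOf]

lemma idsOf_flatten (L : ℕ) (xs : List ℕ) (hx : ∀ x ∈ xs, x < 2 ^ (L + 1)) :
    idsOf L (List.flatten (xs.map (bitsOf (L + 1)))) = xs := by
  induction xs with
  | nil => simp [idsOf_nil]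
  | cons x xs ih =>
    have hb : (bitsOf (L + 1) x).length = L + 1 := bitsOf_length _ _
    have hne : List.flatten ((x :: xs).map (bitsOf (L + 1))) ≠ [] := by
      simp only [List.map_cons, List.flatten_cons]
      intro h
      have := congrArg List.length h
      simp [hb] at this
    rw [idsOf_cons _ _ hne]
    simp only [List.map_cons, List.flatten_cons]
    rw [List.take_left' hb, List.drop_left' hb,
      valOf_bitsOf (hx x (by simp)), ih (fun y hy => hx y (by simp [hy]))]

lemma flatten_map_length (L : ℕ) (xs : List ℕ) :
    (List.flatten (xs.map (bitsOf L))).length = xs.length * L := by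
  induction xs with
  | nil => simp
  | cons x xs ih =>
    simp [List.flatten_cons, ih, Nat.succ_mul, Nat.add_comm]

/-- block size (number of bits per id). -/
noncomputable def dFun (C : ℝ) (f : ℝ → ℝ) (n : ℕ) : ℕ := ⌊2 * C * f n⌋₊

/-- total label length for `n`-vertex graphs. -/
noncomputable def mFun (C : ℝ) (f : ℝ → ℝ) (n : ℕ) : ℕ := (dFun C f n + 1) * Nat.clog 2 n

open Classical in
/-- recover the block size from the total length. -/
noncomputable def gFun (C : ℝ) (f : ℝ → ℝ) (k : ℕ) : ℕ :=
  if h : ∃ n, 2 ≤ n ∧ mFun C f n = k then Nat.clog 2 h.choose else 0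

/-- decoded adjacency predicate on labels. -/
def PP (C : ℝ) (f : ℝ → ℝ) (a b : List Bool) : Prop :=
  a.length = b.length ∧ 0 < gFun C f a.length ∧
    ((idsOf (gFun C f a.length - 1) b).headD 0 ∈ (idsOf (gFun C f a.length - 1) a).drop 1 ∨
     (idsOf (gFun C f a.length - 1) a).headD 0 ∈ (idsOf (gFun C f a.length - 1) b).drop 1)

open Classical in
/-- the decoder. -/
noncomputable def DD (C : ℝ) (f : ℝ → ℝ) (a b : List Bool) : Bool :=
  if PP C f a b then true else false

lemma DD_eq_true_iff (C : ℝ) (f : ℝ → ℝ) (a b : List Bool) :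
    DD C f a b = true ↔ PP C f a b := by
  classical
  by_cases h : PP C f a b <;> simp [DD, h]

lemma clog_pos_of_two_le {n : ℕ} (hn : 2 ≤ n) : 0 < Nat.clog 2 n := by
  by_contra h
  push_neg at h
  have h0 : Nat.clog 2 n ≤ 0 := h
  have := (Nat.clog_le_iff_le_pow (b := 2) (by norm_num) (x := n) (y := 0)).mp h0
  simp at this
  omega

lemma key_clog (C : ℝ) (f : ℝ → ℝ)
    (hf0 : ∀ x : ℝ, 0 ≤ x → 0 ≤ f x)
    (hfmono : ∀ x y : ℝ, 0 ≤ x → x ≤ y → f x ≤ f y)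
    (hC : 1 ≤ C) {n n' : ℕ} (hn : 2 ≤ n) (hn' : 2 ≤ n')
    (hm : mFun C f n = mFun C f n') : Nat.clog 2 n = Nat.clog 2 n' := by
  -- monotone helper
  have mono : ∀ {a b : ℕ}, a ≤ b → dFun C f a ≤ dFun C f b := by
    intro a b hab
    apply Nat.floor_mono
    apply mul_le_mul_of_nonneg_left _ (by linarith)
    exact hfmono _ _ (Nat.cast_nonneg a) (by exact_mod_cast hab)
  have step : ∀ {a b : ℕ}, a ≤ b → 2 ≤ a → mFun C f a = mFun C f b →
      Nat.clog 2 a = Nat.clog 2 b := by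
    intro a b hab ha2 hmab
    have h1 : Nat.clog 2 a ≤ Nat.clog 2 b := Nat.clog_mono_right 2 hab
    have h2 : dFun C f a ≤ dFun C f b := mono hab
    rcases lt_or_eq_of_le h1 with hlt | heq
    · exfalso
      have s1 : (dFun C f a + 1) * Nat.clog 2 a ≤ (dFun C f b + 1) * Nat.clog 2 a :=
        Nat.mul_le_mul_right _ (by omega)
      have s2 : (dFun C f b + 1) * Nat.clog 2 a < (dFun C f b + 1) * Nat.clog 2 b :=
        mul_lt_mul_of_pos_left hlt (Nat.succ_pos _)
      have : mFun C f a < mFun C f b := by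
        unfold mFun; omega
      omega
    · exact heq
  rcases le_total n n' with h | h
  · exact step h hn hm
  · exact (step h hn' hm.symm).symm

lemma gFun_mFun (C : ℝ) (f : ℝ → ℝ)
    (hf0 : ∀ x : ℝ, 0 ≤ x → 0 ≤ f x)
    (hfmono : ∀ x y : ℝ, 0 ≤ x → x ≤ y → f x ≤ f y)
    (hC : 1 ≤ C) {n : ℕ} (hn : 2 ≤ n) :
    gFun C f (mFun C f n) = Nat.clog 2 n := by
  classical
  have hex : ∃ n', 2 ≤ n' ∧ mFun C f n' = mFun C f n := ⟨n, hn, rfl⟩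
  rw [gFun, dif_pos hex]
  exact key_clog C f hf0 hfmono hC hex.choose_spec.1 hn hex.choose_spec.2

end Aux

lemma le_isSubgraphOf {k : ℕ} {H G : SimpleGraph (Fin k)} (h : H ≤ G) :
    IsSubgraphOf H G :=
  ⟨Function.Embedding.refl _, fun _ _ hadj => h hadj⟩

lemma edge_bound (C : ℝ) (f : ℝ → ℝ) (𝒳 : GraphClass)
    (hmono : MonotoneGraphClass 𝒳)
    (hspeed : ∀ n : ℕ, ((𝒳 n).ncard : ℝ) ≤ (2 : ℝ) ^ (C * n * f n))
    (k : ℕ) (H : SimpleGraph (Fin k)) [DecidableRel H.Adj] (hH : H ∈ 𝒳 k) :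
    (H.edgeFinset.card : ℝ) ≤ C * k * f k := by
  classical
  set e := H.edgeFinset.card with he
  -- injection from powerset of edges into 𝒳 k
  have hfin : (𝒳 k).Finite := Set.toFinite _
  have hcard : (2 : ℕ) ^ e ≤ (𝒳 k).ncard := by
    rw [Set.ncard_eq_toFinset_card _ hfin]
    have := Finset.card_le_card_of_injOn
      (f := fun s : Finset (Sym2 (Fin k)) => SimpleGraph.fromEdgeSet (↑s : Set (Sym2 (Fin k))))
      (s := H.edgeFinset.powerset) (t := hfin.toFinset) ?_ ?_
    · simpa [he] using this
    · intro s hs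
      simp only [Finset.mem_coe, Set.Finite.mem_toFinset]
      refine hmono _ H hH (le_isSubgraphOf ?_)
      calc SimpleGraph.fromEdgeSet (↑s) ≤ SimpleGraph.fromEdgeSet H.edgeSet :=
            SimpleGraph.fromEdgeSet_mono (by
              intro x hx
              exact SimpleGraph.mem_edgeFinset.mp (Finset.mem_powerset.mp hs hx))
        _ = H := SimpleGraph.fromEdgeSet_edgeSet H
    · intro s hs t ht hst
      have hs' : (↑s : Set (Sym2 (Fin k))) \ {e | e.IsDiag} = ↑s := by
        ext x
        simp only [Set.mem_diff, Finset.mem_coe, Set.mem_setOf_eq, and_iff_left_iff_imp]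
        intro hx
        exact H.not_isDiag_of_mem_edgeSet
          (SimpleGraph.mem_edgeFinset.mp (Finset.mem_powerset.mp (Finset.mem_coe.mp hs) hx))
      have ht' : (↑t : Set (Sym2 (Fin k))) \ {e | e.IsDiag} = ↑t := by
        ext x
        simp only [Set.mem_diff, Finset.mem_coe, Set.mem_setOf_eq, and_iff_left_iff_imp]
        intro hx
        exact H.not_isDiag_of_mem_edgeSet
          (SimpleGraph.mem_edgeFinset.mp (Finset.mem_powerset.mp (Finset.mem_coe.mp ht) hx))
      have := congrArg SimpleGraph.edgeSet hst
      rw [SimpleGraph.edgeSet_fromEdgeSet, SimpleGraph.edgeSet_fromEdgeSet, Sym2.diagSet_eq_setOfPred_isDiag, hs', ht'] at this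
      exact Finset.coe_injective this
  have h1 : (2 : ℝ) ^ (e : ℝ) ≤ (2 : ℝ) ^ (C * k * f k) := by
    calc (2 : ℝ) ^ (e : ℝ) = ((2 ^ e : ℕ) : ℝ) := by
          rw [Real.rpow_natCast]; push_cast; ring
      _ ≤ ((𝒳 k).ncard : ℝ) := by exact_mod_cast hcard
      _ ≤ _ := hspeed k
  exact (Real.rpow_le_rpow_left_iff (by norm_num)).mp h1

lemma min_degree_bound (C : ℝ) (f : ℝ → ℝ) (𝒳 : GraphClass)
    (hmono : MonotoneGraphClass 𝒳)
    (hspeed : ∀ n : ℕ, ((𝒳 n).ncard : ℝ) ≤ (2 : ℝ) ^ (C * n * f n))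
    (k : ℕ) (hk : 0 < k) (H : SimpleGraph (Fin k)) [DecidableRel H.Adj] (hH : H ∈ 𝒳 k) :
    ∃ v, (H.degree v : ℝ) ≤ 2 * C * f k := by
  by_contra hcon
  push_neg at hcon
  have hsum : ∑ v : Fin k, (H.degree v : ℝ) = 2 * H.edgeFinset.card := by
    rw [← Nat.cast_sum]
    rw [SimpleGraph.sum_degrees_eq_twice_card_edges]
    push_cast; ring
  have h1 : (k : ℝ) * (2 * C * f k) < ∑ v : Fin k, (H.degree v : ℝ) := by
    calc (k : ℝ) * (2 * C * f k) = ∑ _v : Fin k, (2 * C * f k) := by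
          simp [Finset.sum_const, Finset.card_univ]
      _ < _ := by
          apply Finset.sum_lt_sum_of_nonempty
          · exact Finset.univ_nonempty_iff.mpr ⟨⟨0, hk⟩⟩
          · intro v _; exact hcon v
  have h2 := edge_bound C f 𝒳 hmono hspeed k H hH
  rw [hsum] at h1
  nlinarith [h1, h2]

/-- Orientation with small out-degree from a hereditary minimum-degree bound. -/
lemma orientation_of_min_degree (𝒳 : GraphClass) (hmono : MonotoneGraphClass 𝒳)
    (dd : ℕ) (n : ℕ)
    (hd : ∀ k, k ≤ n → 0 < k → ∀ H ∈ 𝒳 k, ∀ [DecidableRel H.Adj], ∃ v, H.degree v ≤ dd) :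
    ∀ k, k ≤ n → ∀ G ∈ 𝒳 k, ∀ [DecidableRel G.Adj],
      ∃ out : Fin k → Finset (Fin k),
        (∀ v, out v ⊆ G.neighborFinset v) ∧ (∀ v, (out v).card ≤ dd) ∧
        (∀ u v, G.Adj u v → v ∈ out u ∨ u ∈ out v) := by
  intro k
  induction k with
  | zero =>
    intro _ G _ _
    exact ⟨fun _ => ∅, fun v => v.elim0, fun v => v.elim0, fun u => u.elim0⟩
  | succ k ih =>
    intro hkn G hG _
    classical
    obtain ⟨v₀, hv₀⟩ := hd (k + 1) hkn (Nat.succ_pos k) G hG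
    set e : Fin k ↪ Fin (k + 1) := v₀.succAboveEmb with he
    set G' : SimpleGraph (Fin k) := G.comap e with hG'def
    have hG' : G' ∈ 𝒳 k := hmono G' G hG ⟨e, fun u v h => h⟩
    obtain ⟨out', hsub', hcard', hcov'⟩ := ih (le_trans (Nat.le_succ k) hkn) G' hG'
    -- inverse of e off v₀
    have hinv : ∀ w : Fin (k + 1), w ≠ v₀ → ∃ u : Fin k, e u = w := by
      intro w hw
      obtain ⟨u, hu⟩ := Fin.exists_succAbove_eq hw
      exact ⟨u, hu⟩
    set out : Fin (k + 1) → Finset (Fin (k + 1)) := fun w =>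
      if h : w = v₀ then G.neighborFinset v₀
      else Finset.image e (out' (hinv w h).choose) with hout
    have hiout : ∀ (w : Fin (k+1)) (h : w ≠ v₀), e ((hinv w h).choose) = w :=
      fun w h => (hinv w h).choose_spec
    refine ⟨out, ?_, ?_, ?_⟩
    · intro w
      by_cases h : w = v₀
      · subst h; simp [hout]
      · intro x hx
        simp only [hout, dif_neg h, Finset.mem_image] at hx
        obtain ⟨y, hy, rfl⟩ := hx
        have := hsub' _ hy
        rw [SimpleGraph.mem_neighborFinset] at this ⊢
        have h2 : G.Adj (e ((hinv w h).choose)) (e y) := this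
        rwa [hiout w h] at h2
    · intro w
      by_cases h : w = v₀
      · subst h
        simpa [hout] using hv₀
      · simp only [hout, dif_neg h]
        exact le_trans Finset.card_image_le (hcard' _)
    · intro a b hab
      by_cases ha : a = v₀
      · subst ha
        left
        simp only [hout, dif_pos rfl, SimpleGraph.mem_neighborFinset]
        exact hab
      by_cases hb : b = v₀
      · subst hb
        right
        simp only [hout, dif_pos rfl, SimpleGraph.mem_neighborFinset]
        exact hab.symm
      · -- both off v₀
        set ua := (hinv a ha).choose with hua
        set ub := (hinv b hb).choose with hub
        have hea : e ua = a := hiout a ha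
        have heb : e ub = b := hiout b hb
        have hadj' : G'.Adj ua ub := by
          show G.Adj (e ua) (e ub)
          rw [hea, heb]; exact hab
        rcases hcov' ua ub hadj' with h | h
        · left
          simp only [hout, dif_neg ha, Finset.mem_image]
          exact ⟨ub, h, heb⟩
        · right
          simp only [hout, dif_neg hb, Finset.mem_image]
          exact ⟨ua, h, hea⟩


lemma master_scheme (f : ℝ → ℝ)
    (hf0 : ∀ x : ℝ, 0 ≤ x → 0 ≤ f x)
    (hfmono : ∀ x y : ℝ, 0 ≤ x → x ≤ y → f x ≤ f y)
    (C : ℝ) (hC : 1 ≤ C) (𝒳 : GraphClass) (hmono : MonotoneGraphClass 𝒳)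
    (hspeed : ∀ n : ℕ, ((𝒳 n).ncard : ℝ) ≤ (2 : ℝ) ^ (C * n * f n)) :
    ∀ n : ℕ, ∀ G ∈ 𝒳 n, ∃ ℓ : Fin n → List Bool,
      (∀ v, (ℓ v).length = mFun C f n) ∧
      ∀ u v : Fin n, u ≠ v → (DD C f (ℓ u) (ℓ v) = true ↔ G.Adj u v) := by
  intro n G hG
  classical
  rcases lt_or_ge n 2 with hn | hn
  · -- n ≤ 1 : empty labels, no pairs of distinct vertices
    refine ⟨fun _ => [], ?_, ?_⟩
    · intro v
      interval_cases n
      · exact absurd v.2 (by omega)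
      · simp [mFun, Nat.clog_one_right]
    · intro u v huv
      exfalso
      apply huv
      have hu := u.2; have hv := v.2
      exact Fin.ext (by omega)
  · -- main case
    set L : ℕ := Nat.clog 2 n with hLdef
    have hL : 0 < L := clog_pos_of_two_le hn
    obtain ⟨Lk, hLk⟩ : ∃ Lk, L = Lk + 1 := ⟨L - 1, by omega⟩
    set d : ℕ := dFun C f n with hddef
    have hnpow : n ≤ 2 ^ L := Nat.le_pow_clog (by norm_num) n
    -- hereditary min-degree bound
    have hd : ∀ k, k ≤ n → 0 < k → ∀ H ∈ 𝒳 k, ∀ [DecidableRel H.Adj],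
        ∃ v, H.degree v ≤ d := by
      intro k hk hkpos H hH _
      obtain ⟨v, hv⟩ := min_degree_bound C f 𝒳 hmono hspeed k hkpos H hH
      refine ⟨v, Nat.le_floor ?_⟩
      refine le_trans hv ?_
      apply mul_le_mul_of_nonneg_left _ (by linarith : (0:ℝ) ≤ 2 * C)
      exact hfmono _ _ (Nat.cast_nonneg k) (by exact_mod_cast hk)
    obtain ⟨out, hsub, hcard, hcov⟩ :=
      orientation_of_min_degree 𝒳 hmono d n hd n le_rfl G hG
    -- the labels
    set padList : Fin n → List ℕ := fun v =>
      ((out v).toList.map Fin.val) ++ List.replicate (d - (out v).card) v.val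
      with hpaddef
    set idList : Fin n → List ℕ := fun v => v.val :: padList v with hiddef
    set ℓ : Fin n → List Bool := fun v => List.flatten ((idList v).map (bitsOf L))
      with hldef
    have hpadlen : ∀ v, (padList v).length = d := by
      intro v
      simp only [hpaddef, List.length_append, List.length_map, Finset.length_toList,
        List.length_replicate]
      have := hcard v
      omega
    have hentry : ∀ v, ∀ x ∈ idList v, x < 2 ^ L := by
      intro v x hx
      have hxn : x < n := by
        simp only [hiddef, List.mem_cons] at hx
        rcases hx with rfl | hx
        · exact v.2
        · simp only [hpaddef, List.mem_append, List.mem_map, List.mem_replicate] at hx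
          rcases hx with ⟨w, _, rfl⟩ | ⟨_, rfl⟩
          · exact w.2
          · exact v.2
      omega
    have hlen : ∀ v, (ℓ v).length = mFun C f n := by
      intro v
      simp only [hldef, flatten_map_length, hiddef, List.length_cons, hpadlen]
      simp only [mFun, ← hddef, ← hLdef]
      try ring
    have hids : ∀ v, idsOf Lk (ℓ v) = idList v := by
      intro v
      simp only [hldef, hLk]
      exact idsOf_flatten Lk (idList v) (by rw [← hLk]; exact hentry v)
    have hmem : ∀ u v : Fin n, u ≠ v → (v.val ∈ padList u ↔ v ∈ out u) := by
      intro u v huv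
      simp only [hpaddef, List.mem_append, List.mem_map, List.mem_replicate]
      constructor
      · rintro (⟨w, hw, hwv⟩ | ⟨_, hvu⟩)
        · rwa [← Fin.val_injective hwv, ← Finset.mem_toList]
        · exact absurd (Fin.val_injective hvu).symm huv
      · intro hv
        exact Or.inl ⟨v, Finset.mem_toList.mpr hv, rfl⟩
    refine ⟨ℓ, hlen, ?_⟩
    intro u v huv
    rw [DD_eq_true_iff]
    have hg : gFun C f (ℓ u).length = L := by
      rw [hlen u, hLdef]
      exact gFun_mFun C f hf0 hfmono hC hn
    have hPP : PP C f (ℓ u) (ℓ v) ↔ (v.val ∈ padList u ∨ u.val ∈ padList v) := by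
      unfold PP
      have hL1 : L - 1 = Lk := by omega
      rw [hg, hL1]
      rw [hids u, hids v, hlen u, hlen v]
      simp only [hiddef, List.headD_cons, List.drop_one, List.tail_cons]
      tauto
    rw [hPP, hmem u v huv, hmem v u (Ne.symm huv)]
    constructor
    · rintro (h | h)
      · exact (SimpleGraph.mem_neighborFinset _ _ _).mp (hsub u h)
      · exact ((SimpleGraph.mem_neighborFinset _ _ _).mp (hsub v h)).symm
    · exact hcov u v

/-- Let `f : ℝ₊ → ℝ₊` be non-decreasing and let `𝒳` be a monotone class
with `|𝒳ₙ| ≤ 2 ^ (C * n * f n)` for all `n`, for some constant `C ≥ 1`. Then `𝒳` admits an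
adjacency labeling scheme of size `(2 * C * f n + 1) * ⌈log₂ n⌉`; in particular, `𝒳` admits
an `O(f n * log n)`-bit adjacency labeling scheme. -/
theorem monotone_speed_labeling_scheme (f : ℝ → ℝ)
    (hf0 : ∀ x : ℝ, 0 ≤ x → 0 ≤ f x)
    (hfmono : ∀ x y : ℝ, 0 ≤ x → x ≤ y → f x ≤ f y)
    (C : ℝ) (hC : 1 ≤ C) (𝒳 : GraphClass) (hmono : MonotoneGraphClass 𝒳)
    (hspeed : ∀ n : ℕ, ((𝒳 n).ncard : ℝ) ≤ (2 : ℝ) ^ (C * n * f n)) :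
    HasSchemeLe 𝒳 (fun n => (2 * C * f n + 1) * (Nat.clog 2 n : ℝ)) ∧
    ∃ (b : ℕ → ℕ) (K : ℝ) (n₀ : ℕ), 0 < K ∧ HasScheme 𝒳 b ∧
      ∀ n : ℕ, n₀ ≤ n → (b n : ℝ) ≤ K * (f n * Real.logb 2 n) := by
  classical
  have master := master_scheme f hf0 hfmono C hC 𝒳 hmono hspeed
  constructor
  · refine ⟨DD C f, ?_⟩
    intro n G hG
    obtain ⟨ℓ, hlen, hdec⟩ := master n G hG
    refine ⟨ℓ, ?_, hdec⟩
    intro v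
    rw [hlen v]
    have h0 : (0:ℝ) ≤ 2 * C * f n := by
      have := hf0 n (Nat.cast_nonneg n); nlinarith
    have hfl : ((dFun C f n : ℕ) : ℝ) ≤ 2 * C * f n := Nat.floor_le h0
    have hmc : (mFun C f n : ℝ) = ((dFun C f n : ℝ) + 1) * (Nat.clog 2 n : ℝ) := by
      simp only [mFun]; push_cast; ring
    rw [hmc]
    exact mul_le_mul_of_nonneg_right (by linarith) (Nat.cast_nonneg _)
  · by_cases hz : ∃ N : ℕ, 0 < f N
    · obtain ⟨N, hN⟩ := hz
      refine ⟨mFun C f, 4*C + 2 / f N, N + 2, ?_, ⟨DD C f, master⟩, ?_⟩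
      · have h2 : 0 < 2 / f N := by positivity
        linarith
      · intro n hn
        have hn2 : 2 ≤ n := by omega
        have hNn : (N:ℝ) ≤ n := by exact_mod_cast (by omega : N ≤ n)
        have hfn : f N ≤ f n := hfmono _ _ (Nat.cast_nonneg N) hNn
        have hfnpos : 0 < f n := lt_of_lt_of_le hN hfn
        have h0 : (0:ℝ) ≤ 2 * C * f n := by nlinarith
        have hfl : ((dFun C f n : ℕ) : ℝ) ≤ 2 * C * f n := Nat.floor_le h0
        have hA : ((dFun C f n : ℕ) : ℝ) + 1 ≤ (2*C + 1 / f N) * f n := by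
          have h1 : 1 ≤ f n / f N := (one_le_div hN).mpr hfn
          have h2 : (2*C + 1/f N) * f n = 2*C*f n + f n / f N := by
            field_simp
          rw [h2]
          linarith
        have hlog1 : 0 < Nat.log 2 n := Nat.log_pos (by norm_num) hn2
        have hclog : Nat.clog 2 n ≤ Nat.log 2 n + 1 := by
          apply (Nat.clog_le_iff_le_pow (by norm_num)).mpr
          exact le_of_lt (Nat.lt_pow_succ_log_self (by norm_num) n)
        have hBnat : Nat.clog 2 n ≤ 2 * Nat.log 2 n := by omega
        have hnatlog : ((Nat.log 2 n : ℕ) : ℝ) ≤ Real.logb 2 n := by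
          have := Real.natLog_le_logb n 2
          simpa using this
        have hB : ((Nat.clog 2 n : ℕ) : ℝ) ≤ 2 * Real.logb 2 n := by
          calc ((Nat.clog 2 n : ℕ):ℝ) ≤ ((2 * Nat.log 2 n : ℕ) : ℝ) := by
                exact_mod_cast hBnat
            _ = 2 * ((Nat.log 2 n : ℕ):ℝ) := by push_cast; ring
            _ ≤ 2 * Real.logb 2 n := by linarith
        have hmc : (mFun C f n : ℝ) = (((dFun C f n:ℕ):ℝ) + 1) * ((Nat.clog 2 n : ℕ):ℝ) := by
          simp only [mFun]; push_cast; ring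
        rw [hmc]
        calc (((dFun C f n:ℕ):ℝ) + 1) * ((Nat.clog 2 n : ℕ):ℝ)
            ≤ ((2*C + 1/f N) * f n) * (2 * Real.logb 2 n) := by
              apply mul_le_mul hA hB (Nat.cast_nonneg _)
              nlinarith
          _ = (4*C + 2/f N) * (f n * Real.logb 2 n) := by ring
    · push_neg at hz
      have hfz : ∀ n : ℕ, f n = 0 := fun n => le_antisymm (hz n) (hf0 n (Nat.cast_nonneg n))
      refine ⟨fun _ => 0, 1, 0, one_pos, ⟨fun _ _ => false, ?_⟩, ?_⟩
      · intro n G hG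
        refine ⟨fun _ => [], fun v => rfl, ?_⟩
        intro u v huv
        rw [iff_false_intro (?_ : ¬ G.Adj u v)]
        · simp
        intro hadj
        have hb : (⊥ : SimpleGraph (Fin n)) ∈ 𝒳 n :=
          hmono ⊥ G hG ⟨Function.Embedding.refl _, by intro a b h; simp at h⟩
        have hGbot : (⊥ : SimpleGraph (Fin n)) ≠ G := by
          intro h; rw [← h] at hadj; simp at hadj
        have h2 : 1 < (𝒳 n).ncard :=
          (Set.one_lt_ncard (Set.toFinite _)).mpr ⟨⊥, hb, G, hG, hGbot⟩
        have h3 := hspeed n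
        rw [hfz n, mul_zero, Real.rpow_zero] at h3
        have : (𝒳 n).ncard ≤ 1 := by exact_mod_cast h3
        omega
      · intro n _
        rw [hfz n]
        simp
end

section
/- Let G be a connected graph on n vertices with minimum degree d ≥ 1000 that has a spanning tree of maximum degree at most d. Then the number of graphs with vertex set {1,…,n} that are isomorphic to a subgraph of G is at least n!·2^{n·d/3}. -/
open Finset Real


open Finset

private lemma walk_crossing {V : Type*} [DecidableEq V] {T : SimpleGraph V} :
    ∀ {u v : V} (_ : T.Walk u v) (s : Finset V), u ∈ s → v ∉ s →
      ∃ a ∈ s, ∃ b, b ∉ s ∧ T.Adj a b := by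
  intro u v p
  induction p with
  | nil => intro s hu hv; exact absurd hu hv
  | @cons a b c h p ih =>
    intro s hu hv
    by_cases hb : b ∈ s
    · exact ih s hb hv
    · exact ⟨a, hu, b, hb, h⟩

private lemma exists_enum {V : Type*} [Fintype V] [DecidableEq V] {T : SimpleGraph V}
    (hT : T.Connected) {n : ℕ} (hn : Fintype.card V = n) :
    ∃ o : Fin n ≃ V, ∀ i : Fin n, i.val ≠ 0 → ∃ j : Fin n, j < i ∧ T.Adj (o j) (o i) := by
  have hne : Nonempty V := hT.nonempty
  obtain ⟨v₀⟩ := hne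
  -- build partial enumerations
  have key : ∀ k : ℕ, k ≤ n → ∃ f : Fin k → V, Function.Injective f ∧
      ∀ i : Fin k, i.val ≠ 0 → ∃ j : Fin k, j < i ∧ T.Adj (f j) (f i) := by
    intro k
    induction k with
    | zero =>
      intro _
      refine ⟨fun _ => v₀, ?_, ?_⟩
      · intro a b _; exact absurd a.isLt (by omega)
      · intro i; exact absurd i.isLt (by omega)
    | succ k ih =>
      intro hk
      obtain ⟨f, hfinj, hfchain⟩ := ih (Nat.le_of_succ_le hk)
      by_cases hk0 : k = 0
      · subst hk0
        refine ⟨fun _ => v₀, fun a b _ => by omega, ?_⟩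
        intro i hi; exact absurd (Nat.lt_one_iff.1 i.isLt) hi
      · -- the image so far
        set s : Finset V := Finset.univ.image f with hs
        have hscard : s.card = k := by
          rw [hs, Finset.card_image_of_injective _ hfinj, Finset.card_univ, Fintype.card_fin]
        have hsne : s.Nonempty := by
          rw [← Finset.card_pos, hscard]; omega
        have hsnu : s ≠ Finset.univ := by
          intro h
          have := hscard
          rw [h, Finset.card_univ, hn] at this
          omega
        -- a vertex outside s
        have : ∃ w, w ∉ s := by
          by_contra h
          push_neg at h
          exact hsnu (Finset.eq_univ_iff_forall.2 h)
        obtain ⟨w, hw⟩ := this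
        obtain ⟨u, hu⟩ := hsne
        obtain ⟨a, ha, b, hb, hab⟩ := walk_crossing ((hT.preconnected u w).some) s hu hw
        -- a = f j0 for some j0
        obtain ⟨j0, _, hj0⟩ := Finset.mem_image.1 ha
        refine ⟨fun i => if h : i.val < k then f ⟨i.val, h⟩ else b, ?_, ?_⟩
        · intro x y hxy
          by_cases hx : x.val < k <;> by_cases hy : y.val < k <;> simp [hx, hy] at hxy
          · exact Fin.ext (congrArg Fin.val (hfinj hxy) : _)
          · exact absurd (hxy ▸ Finset.mem_image_of_mem f (Finset.mem_univ _) : b ∈ s) hb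
          · exact absurd (hxy ▸ Finset.mem_image_of_mem f (Finset.mem_univ _) : b ∈ s) (by
              simpa using hb)
          · omega
        · intro i hi
          by_cases hik : i.val < k
          · obtain ⟨j, hji, hadj⟩ := hfchain ⟨i.val, hik⟩ hi
            refine ⟨⟨j.val, by omega⟩, by simpa [Fin.lt_def] using (by simpa [Fin.lt_def] using hji : j.val < i.val), ?_⟩
            simp only [dif_pos (show j.val < k from j.isLt), dif_pos hik]
            exact hadj
          · have hik' : i.val = k := by omega
            refine ⟨⟨j0.val, by omega⟩, by simp [Fin.lt_def]; omega, ?_⟩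
            simp only [dif_pos (show j0.val < k from j0.isLt), dif_neg (by omega : ¬ i.val < k)]
            rw [show (⟨j0.val, j0.isLt⟩ : Fin k) = j0 from rfl, hj0]
            exact hab
  obtain ⟨f, hfinj, hfchain⟩ := key n le_rfl
  have hbij : Function.Bijective f := by
    rw [Fintype.bijective_iff_injective_and_card]
    exact ⟨hfinj, by rw [hn, Fintype.card_fin]⟩
  exact ⟨Equiv.ofBijective f hbij, fun i hi => hfchain i hi⟩


open Finset

set_option maxHeartbeats 1000000

private lemma castLE_equivFin_inj {α : Type*} [DecidableEq α] {D : ℕ} {s s' : Finset α}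
    (hss : s = s') {x x' : α} (hx : x ∈ s) (hx' : x' ∈ s')
    (h1 : s.card ≤ D) (h2 : s'.card ≤ D)
    (h : Fin.castLE h1 (s.equivFin ⟨x, hx⟩) = Fin.castLE h2 (s'.equivFin ⟨x', hx'⟩)) :
    x = x' := by
  subst hss
  have hv : s.equivFin ⟨x, hx⟩ = s.equivFin ⟨x', hx'⟩ := by
    apply Fin.ext
    simpa using congrArg Fin.val h
  have := s.equivFin.injective hv
  exact congrArg Subtype.val this

private lemma count_hom_le {V : Type*} [Fintype V] [DecidableEq V]
    {T G : SimpleGraph V} [DecidableRel G.Adj] {n : ℕ} (npos : 0 < n)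
    (o : Fin n ≃ V) (par : Fin n → Fin n)
    (hpar : ∀ i : Fin n, i.val ≠ 0 → par i < i ∧ T.Adj (o (par i)) (o i))
    (H : SimpleGraph (Fin n)) [DecidableRel H.Adj] :
    Nat.card {g : V ≃ Fin n // (∀ a b, T.Adj a b → H.Adj (g a) (g b)) ∧
        (∀ u v, H.Adj u v → G.Adj (g.symm u) (g.symm v))} ≤
      n * ∏ i : Fin n, (if i.val = 0 then 1 else G.degree (o (par i))) := by
  classical
  -- degree bound: for a valid g, H-degree of image of a vertex is at most its G-degree
  have degle : ∀ (g : V ≃ Fin n), (∀ u v, H.Adj u v → G.Adj (g.symm u) (g.symm v)) →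
      ∀ w : V, (H.neighborFinset (g w)).card ≤ G.degree w := by
    intro g hg w
    rw [← SimpleGraph.card_neighborFinset_eq_degree]
    apply Finset.card_le_card_of_injOn (fun y => g.symm y)
    · intro y hy
      rw [Finset.mem_coe, SimpleGraph.mem_neighborFinset] at hy ⊢
      have := hg _ _ hy
      rwa [g.symm_apply_apply] at this
    · intro a _ b _ hab
      exact g.symm.injective hab
  have hmem : ∀ (g : V ≃ Fin n), (∀ a b, T.Adj a b → H.Adj (g a) (g b)) →
      ∀ i : Fin n, i.val ≠ 0 → g (o i) ∈ H.neighborFinset (g (o (par i))) := by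
    intro g hg i hi
    rw [SimpleGraph.mem_neighborFinset]
    exact hg _ _ (hpar i hi).2
  have hDle : ∀ (g : V ≃ Fin n), (∀ u v, H.Adj u v → G.Adj (g.symm u) (g.symm v)) →
      ∀ i : Fin n, i.val ≠ 0 →
      (H.neighborFinset (g (o (par i)))).card ≤
        (if i.val = 0 then 1 else G.degree (o (par i))) := by
    intro g hg i hi
    rw [if_neg hi]
    exact degle g hg (o (par i))
  have hcard : Nat.card {g : V ≃ Fin n // (∀ a b, T.Adj a b → H.Adj (g a) (g b)) ∧
        (∀ u v, H.Adj u v → G.Adj (g.symm u) (g.symm v))} ≤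
      Nat.card (Fin n × (∀ i : Fin n, Fin (if i.val = 0 then 1 else G.degree (o (par i))))) := by
    apply Nat.card_le_card_of_injective
      (fun g => (g.1 (o ⟨0, npos⟩), fun i =>
        if h : i.val ≠ 0 then
          Fin.castLE (hDle g.1 g.2.2 i h)
            ((H.neighborFinset (g.1 (o (par i)))).equivFin ⟨g.1 (o i), hmem g.1 g.2.1 i h⟩)
        else ⟨0, by rw [if_pos (not_not.1 h)]; omega⟩))
    intro g g' hgg
    have h1 : g.1 (o ⟨0, npos⟩) = g'.1 (o ⟨0, npos⟩) := congrArg Prod.fst hgg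
    have h2 := congrArg Prod.snd hgg
    have hval : ∀ k : ℕ, ∀ hk : k < n, g.1 (o ⟨k, hk⟩) = g'.1 (o ⟨k, hk⟩) := by
      intro k
      induction k using Nat.strong_induction_on with
      | _ k ih =>
        intro hk
        by_cases h0 : k = 0
        · subst h0; exact h1
        · have hiv : (⟨k, hk⟩ : Fin n).val ≠ 0 := h0
          have hpi := (hpar ⟨k, hk⟩ hiv).1
          have hparent : g.1 (o (par ⟨k, hk⟩)) = g'.1 (o (par ⟨k, hk⟩)) := by
            have := ih (par ⟨k, hk⟩).val (by simpa [Fin.lt_def] using hpi) (par ⟨k, hk⟩).isLt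
            simpa using this
          have h2i := congrFun h2 ⟨k, hk⟩
          simp only [dif_pos hiv] at h2i
          exact castLE_equivFin_inj (by rw [hparent]) _ _ _ _ h2i
    apply Subtype.ext
    apply Equiv.ext
    intro v
    have hv : ∃ k : ℕ, ∃ hk : k < n, o ⟨k, hk⟩ = v := ⟨(o.symm v).val, (o.symm v).isLt, by simp⟩
    obtain ⟨k, hk, rfl⟩ := hv
    exact hval k hk
  calc Nat.card _ ≤ _ := hcard
    _ = n * ∏ i : Fin n, (if i.val = 0 then 1 else G.degree (o (par i))) := by
        rw [Nat.card_eq_fintype_card, Fintype.card_prod, Fintype.card_pi, Fintype.card_fin]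
        simp



private lemma le_two_rpow {t : ℝ} (ht : 0 ≤ t) : t ≤ (2:ℝ) ^ t := by
  have hlog : (0.6931471803 : ℝ) < Real.log 2 := Real.log_two_gt_d9
  have h1 : Real.log 2 * t / 2 + 1 ≤ Real.exp (Real.log 2 * t / 2) :=
    Real.add_one_le_exp _
  have h2 : Real.exp (Real.log 2 * t / 2) ^ 2 = Real.exp (Real.log 2 * t) := by
    rw [← Real.exp_nat_mul]; ring_nf
  have h3 : (2:ℝ) ^ t = Real.exp (Real.log 2 * t) := by
    rw [Real.rpow_def_of_pos (by norm_num)]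
  rw [h3, ← h2]
  nlinarith [Real.exp_pos (Real.log 2 * t / 2), sq_nonneg (Real.log 2 * t / 2 - 1),
    mul_nonneg (le_of_lt (lt_trans (by norm_num) hlog)) ht]

private lemma nat_le_K_mul_two_rpow (D : ℕ) {K : ℝ} (hK : 0 < K) :
    (D:ℝ) ≤ K * 2 ^ ((D:ℝ)/K) := by
  have ht : (0:ℝ) ≤ (D:ℝ)/K := by positivity
  have := le_two_rpow ht
  calc (D:ℝ) = K * ((D:ℝ)/K) := by field_simp
    _ ≤ K * 2 ^ ((D:ℝ)/K) := by
        apply mul_le_mul_of_nonneg_left this (le_of_lt hK)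

private lemma two_rpow_sum {ι : Type*} (s : Finset ι) (x : ι → ℝ) :
    (2:ℝ) ^ (∑ i ∈ s, x i) = ∏ i ∈ s, (2:ℝ) ^ (x i) := by
  classical
  induction s using Finset.cons_induction with
  | empty => simp
  | cons a s ha ih => rw [Finset.sum_cons, Finset.prod_cons, Real.rpow_add (by norm_num), ih]

private lemma fortyeight_le {d : ℕ} (hd : 1000 ≤ d) :
    (48 * d : ℝ) ≤ (2:ℝ) ^ ((d:ℝ)/12) := by
  have hd' : (1000:ℝ) ≤ (d:ℝ) := by exact_mod_cast hd
  have hlog : (0.6931471803 : ℝ) < Real.log 2 := Real.log_two_gt_d9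
  have h60 : (d:ℝ)/87 ≤ (2:ℝ) ^ ((d:ℝ)/60) := by
    have h1 : Real.log 2 * ((d:ℝ)/60) + 1 ≤ Real.exp (Real.log 2 * ((d:ℝ)/60)) :=
      Real.add_one_le_exp _
    have h3 : (2:ℝ) ^ ((d:ℝ)/60) = Real.exp (Real.log 2 * ((d:ℝ)/60)) := by
      rw [Real.rpow_def_of_pos (by norm_num)]
    rw [h3]
    nlinarith
  have hpow : ((d:ℝ)/87) ^ (5:ℕ) ≤ ((2:ℝ) ^ ((d:ℝ)/60)) ^ (5:ℕ) := by
    apply pow_le_pow_left₀ (by positivity) h60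
  have heq : ((2:ℝ) ^ ((d:ℝ)/60)) ^ (5:ℕ) = (2:ℝ) ^ ((d:ℝ)/12) := by
    rw [← Real.rpow_natCast ((2:ℝ) ^ ((d:ℝ)/60)) 5, ← Real.rpow_mul (by norm_num)]
    congr 1
    ring
  have hfinal : (48 * d : ℝ) ≤ ((d:ℝ)/87) ^ (5:ℕ) := by
    have h4 : (1000:ℝ)^(4:ℕ) ≤ (d:ℝ)^(4:ℕ) := pow_le_pow_left₀ (by norm_num) hd' 4
    have hmul : (1000:ℝ)^(4:ℕ) * (d:ℝ) ≤ (d:ℝ)^(4:ℕ) * (d:ℝ) :=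
      mul_le_mul_of_nonneg_right h4 (by linarith)
    have e : ((d:ℝ)/87) ^ (5:ℕ) = (d:ℝ)^(4:ℕ) * (d:ℝ) / 87^(5:ℕ) := by ring
    rw [e, le_div_iff₀ (by norm_num)]
    nlinarith
  calc (48 * d : ℝ) ≤ ((d:ℝ)/87) ^ (5:ℕ) := hfinal
    _ ≤ _ := heq ▸ hpow

private lemma numeric_final {n d m k : ℝ} (hn1 : 1 ≤ n)
    (hk0 : 0 ≤ k) (hkn : k ≤ n) (hnd : n * d ≤ 2 * m)
    (hn2 : n ≤ (2:ℝ) ^ n) (h48 : 48 * d ≤ (2:ℝ) ^ (d / 12))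
    (hd0 : 0 ≤ d)
    {P : ℝ} (hP : 0 ≤ P) (hPle : P ≤ (12*d) ^ n * 2 ^ (m/6)) :
    (2:ℝ) ^ (n * d / 3) * (n * P) ≤ 2 ^ (m - k) := by
  have h2 : (0:ℝ) < 2 := by norm_num
  have hm0 : 0 ≤ m := by nlinarith
  have hk2 : (2:ℝ) ^ k ≤ 2 ^ n := Real.rpow_le_rpow_of_exponent_le (by norm_num) hkn
  rw [Real.rpow_sub h2, le_div_iff₀ (Real.rpow_pos_of_pos h2 k)]
  have step1 : (2:ℝ) ^ (n * d / 3) * (n * P) * 2 ^ k ≤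
      2 ^ (n * d / 3) * ((2:ℝ)^n * ((12*d) ^ n * 2 ^ (m/6)) * 2 ^ n) := by
    have hp1 : (0:ℝ) ≤ 2 ^ (n*d/3) := le_of_lt (Real.rpow_pos_of_pos h2 _)
    have h2n : (0:ℝ) < 2 ^ n := Real.rpow_pos_of_pos h2 n
    have hnn : 0 ≤ n := by linarith
    calc (2:ℝ) ^ (n * d / 3) * (n * P) * 2 ^ k
        ≤ (2:ℝ) ^ (n * d / 3) * ((2:ℝ)^n * ((12*d) ^ n * 2 ^ (m/6))) * 2 ^ n := by
          apply mul_le_mul _ hk2 (le_of_lt (Real.rpow_pos_of_pos h2 k)) (by positivity)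
          apply mul_le_mul_of_nonneg_left _ hp1
          exact mul_le_mul hn2 hPle hP (le_of_lt h2n)
      _ = 2 ^ (n * d / 3) * ((2:ℝ)^n * ((12*d) ^ n * 2 ^ (m/6)) * 2 ^ n) := by ring
  have step2 : (2:ℝ)^n * ((12*d) ^ n * 2 ^ (m/6)) * 2 ^ n =
      (48*d) ^ n * 2 ^ (m/6) := by
    have : (48*d:ℝ) ^ n = (2:ℝ)^n * (12*d) ^ n * 2^n := by
      rw [← Real.mul_rpow (by norm_num) (by positivity), ← Real.mul_rpow (by positivity) (by norm_num)]
      ring_nf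
    rw [this]; ring
  have step3 : (48*d:ℝ) ^ n ≤ (2:ℝ) ^ (d/12 * n) := by
    rw [Real.rpow_mul (by norm_num)]
    exact Real.rpow_le_rpow (by positivity) h48 (by linarith)
  calc (2:ℝ) ^ (n * d / 3) * (n * P) * 2 ^ k
      ≤ 2 ^ (n * d / 3) * ((48*d) ^ n * 2 ^ (m/6)) := by rw [← step2]; exact step1
    _ ≤ 2 ^ (n * d / 3) * (2 ^ (d/12 * n) * 2 ^ (m/6)) := by
        apply mul_le_mul_of_nonneg_left _ (le_of_lt (Real.rpow_pos_of_pos h2 _))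
        apply mul_le_mul_of_nonneg_right step3 (le_of_lt (Real.rpow_pos_of_pos h2 _))
    _ = 2 ^ (n * d / 3 + d/12 * n + m/6) := by
        rw [← Real.rpow_add h2, ← Real.rpow_add h2]
        congr 1
        ring
    _ ≤ 2 ^ m := by
        apply Real.rpow_le_rpow_of_exponent_le (by norm_num)
        nlinarith

/-- Let `G` be a connected graph on `n` vertices with minimum degree
`d ≥ 1000` having a spanning tree of maximum degree at most `d`. Then the number of
(labeled) graphs with vertex set `{1, …, n}` isomorphic to a subgraph of `G` is at least
`n! * 2 ^ (n * d / 3)`. -/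
theorem many_labeled_subgraphs {V : Type*} [Fintype V]
    (G : SimpleGraph V) (n d : ℕ)
    (hn : Fintype.card V = n)
    (hconn : G.Connected) (hd : 1000 ≤ d)
    (hmin : ∀ v : V, d ≤ (G.neighborSet v).ncard)
    (htree : ∃ T : SimpleGraph V, T ≤ G ∧ T.IsTree ∧
      ∀ v : V, (T.neighborSet v).ncard ≤ d) :
    (n.factorial : ℝ) * (2 : ℝ) ^ ((n * d : ℝ) / 3) ≤
      (({H : SimpleGraph (Fin n) |
        ∃ φ : Fin n ↪ V, ∀ u v : Fin n, H.Adj u v → G.Adj (φ u) (φ v)}.ncard : ℕ) : ℝ) := by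
  classical
  obtain ⟨T, hTG, hTtree, hTd'⟩ := htree
  have hV : Nonempty V := hconn.nonempty
  have npos : 0 < n := by rw [← hn]; exact Fintype.card_pos
  have dpos : 0 < d := by omega
  have hdegG : ∀ v, d ≤ G.degree v := by
    intro v
    have := hmin v
    rwa [Set.ncard_eq_toFinset_card', ← SimpleGraph.neighborFinset_def,
      SimpleGraph.card_neighborFinset_eq_degree] at this
  have hdegT : ∀ v, T.degree v ≤ d := by
    intro v
    have := hTd' v
    rwa [Set.ncard_eq_toFinset_card', ← SimpleGraph.neighborFinset_def,
      SimpleGraph.card_neighborFinset_eq_degree] at this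
  set m := G.edgeFinset.card with hm
  have hnd2m : n * d ≤ 2 * m := by
    have h1 : ∑ v : V, G.degree v = 2 * m := G.sum_degrees_eq_twice_card_edges
    have h2 : n * d ≤ ∑ v : V, G.degree v := by
      calc n * d = ∑ _v : V, d := by rw [Finset.sum_const, Finset.card_univ, hn, smul_eq_mul]
        _ ≤ ∑ v : V, G.degree v := Finset.sum_le_sum fun v _ => hdegG v
    omega
  obtain ⟨o, ho⟩ := exists_enum (hTtree.isConnected) hn
  have hpar' : ∀ i : Fin n, ∃ j : Fin n, i.val ≠ 0 → (j < i ∧ T.Adj (o j) (o i)) := by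
    intro i
    by_cases h : i.val ≠ 0
    · obtain ⟨j, hj⟩ := ho i h; exact ⟨j, fun _ => hj⟩
    · exact ⟨i, fun h' => absurd h' h⟩
  choose par hpar using hpar'
  set i0 : Fin n := ⟨0, npos⟩ with hi0
  set D : Fin n → ℕ := fun i => if i.val = 0 then 1 else G.degree (o (par i)) with hD
  set B : ℕ := n * ∏ i, D i with hB
  set R : Finset (Sym2 V) := G.edgeFinset \ T.edgeFinset with hR
  have hTsubG : T.edgeFinset ⊆ G.edgeFinset := SimpleGraph.edgeFinset_mono hTG
  have hTcard : T.edgeFinset.card + 1 = n := by rw [← hn]; exact hTtree.card_edgeFinset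
  have hTlem : T.edgeFinset.card ≤ m := Finset.card_le_card hTsubG
  have hRcard : R.card + (n - 1) = m := by
    rw [hR, Finset.card_sdiff_of_subset hTsubG]
    omega
  set A : Finset ((V ≃ Fin n) × Finset (Sym2 V)) := Finset.univ ×ˢ R.powerset with hA
  set Φ : (V ≃ Fin n) × Finset (Sym2 V) → SimpleGraph (Fin n) :=
    fun p => SimpleGraph.map p.1.toEmbedding (T ⊔ SimpleGraph.fromEdgeSet ↑p.2) with hPhi
  have hAcard : A.card = n.factorial * 2 ^ R.card := by
    have hcV : Fintype.card (V ≃ Fin n) = n.factorial := by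
      have h := Fintype.card_equiv o.symm
      rw [hn] at h
      convert h using 2 <;> exact Subsingleton.elim _ _
    rw [hA, Finset.card_product, Finset.card_univ, hcV, Finset.card_powerset]
  -- subgraphs used are ≤ G
  have hXle : ∀ F : Finset (Sym2 V), F ∈ R.powerset →
      (T ⊔ SimpleGraph.fromEdgeSet ↑F) ≤ G := by
    intro F hF
    rw [Finset.mem_powerset] at hF
    apply sup_le hTG
    intro a b hab
    rw [SimpleGraph.fromEdgeSet_adj] at hab
    have : s(a, b) ∈ R := hF hab.1
    rw [hR, Finset.mem_sdiff, SimpleGraph.mem_edgeFinset] at this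
    exact this.1
  -- the image of Φ on A lands in the target set
  set Sset : Set (SimpleGraph (Fin n)) := {H : SimpleGraph (Fin n) |
      ∃ φ : Fin n ↪ V, ∀ u v : Fin n, H.Adj u v → G.Adj (φ u) (φ v)} with hSset
  have himg : ∀ p ∈ A, Φ p ∈ Sset := by
    intro p hp
    rw [hA, Finset.mem_product] at hp
    refine ⟨p.1.symm.toEmbedding, ?_⟩
    intro u v huv
    rw [hPhi] at huv
    simp only [SimpleGraph.map_adj] at huv
    obtain ⟨a, b, hab, ha, hb⟩ := huv
    have ha' : p.1.symm u = a := by rw [← ha]; exact p.1.symm_apply_apply a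
    have hb' : p.1.symm v = b := by rw [← hb]; exact p.1.symm_apply_apply b
    simp only [Equiv.coe_toEmbedding, ha', hb']
    exact hXle p.2 hp.2 hab
  -- fiber bound
  have hfiber : ∀ HH ∈ A.image Φ, (A.filter (fun p => Φ p = HH)).card ≤ B := by
    intro HH _
    have hcount := count_hom_le (T := T) (G := G) npos o par (fun i hi => hpar i hi) HH
    have hstep : (A.filter (fun p => Φ p = HH)).card ≤
        Nat.card {g : V ≃ Fin n // (∀ a b, T.Adj a b → HH.Adj (g a) (g b)) ∧
          (∀ u v, HH.Adj u v → G.Adj (g.symm u) (g.symm v))} := by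
      rw [← Nat.card_eq_finsetCard]
      apply Nat.card_le_card_of_injective
        (f := fun p : {x // x ∈ A.filter (fun p => Φ p = HH)} => (⟨p.val.1, by
          obtain ⟨⟨g, F⟩, hp⟩ := p
          rw [Finset.mem_filter, hA, Finset.mem_product] at hp
          obtain ⟨⟨_, hF⟩, hPhiH⟩ := hp
          show (∀ a b, T.Adj a b → HH.Adj (g a) (g b)) ∧
            (∀ u v, HH.Adj u v → G.Adj (g.symm u) (g.symm v))
          have hPhiH2 : SimpleGraph.map g.toEmbedding (T ⊔ SimpleGraph.fromEdgeSet ↑F) = HH :=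
            hPhiH
          constructor
          · intro a b hab
            rw [← hPhiH2, SimpleGraph.map_adj]
            exact ⟨a, b, Or.inl hab, rfl, rfl⟩
          · intro u v huv
            rw [← hPhiH2] at huv
            simp only [SimpleGraph.map_adj] at huv
            obtain ⟨a, b, hab, ha, hb⟩ := huv
            have ha' : g.symm u = a := by rw [← ha]; exact g.symm_apply_apply a
            have hb' : g.symm v = b := by rw [← hb]; exact g.symm_apply_apply b
            rw [ha', hb']
            exact hXle F hF hab⟩ :
            {g : V ≃ Fin n // (∀ a b, T.Adj a b → HH.Adj (g a) (g b)) ∧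
              (∀ u v, HH.Adj u v → G.Adj (g.symm u) (g.symm v))}))
      rintro ⟨⟨g, F⟩, hp⟩ ⟨⟨g', F'⟩, hq⟩ hfq
      have hg : g = g' := congrArg Subtype.val hfq
      subst hg
      rw [Finset.mem_filter, hA, Finset.mem_product] at hp hq
      obtain ⟨⟨_, hF⟩, hPhiH⟩ := hp
      obtain ⟨⟨_, hF'⟩, hPhiH'⟩ := hq
      rw [Finset.mem_powerset] at hF hF'
      have hXeq : T ⊔ SimpleGraph.fromEdgeSet ↑F = T ⊔ SimpleGraph.fromEdgeSet ↑F' := by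
        apply SimpleGraph.map_injective g.toEmbedding
        have h1 : SimpleGraph.map g.toEmbedding (T ⊔ SimpleGraph.fromEdgeSet ↑F) = HH := hPhiH
        have h2 : SimpleGraph.map g.toEmbedding (T ⊔ SimpleGraph.fromEdgeSet ↑F') = HH := hPhiH'
        rw [h1, h2]
      have hFF : F = F' := by
        have key : ∀ (F₁ F₂ : Finset (Sym2 V)), F₁ ⊆ R → F₂ ⊆ R →
            T ⊔ SimpleGraph.fromEdgeSet ↑F₁ = T ⊔ SimpleGraph.fromEdgeSet ↑F₂ →
            ∀ e, e ∈ F₁ → e ∈ F₂ := by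
          intro F₁ F₂ h₁ h₂ hXX e he
          induction e with
          | h a b =>
            have heR := h₁ he
            rw [hR, Finset.mem_sdiff] at heR
            obtain ⟨heG, heT⟩ := heR
            have hne : a ≠ b := by
              rw [SimpleGraph.mem_edgeFinset] at heG
              intro h
              subst h
              exact (SimpleGraph.irrefl G) ((SimpleGraph.mem_edgeSet G).1 heG)
            have hX1 : (T ⊔ SimpleGraph.fromEdgeSet ↑F₁).Adj a b :=
              Or.inr ((SimpleGraph.fromEdgeSet_adj _).2 ⟨he, hne⟩)
            rw [hXX] at hX1
            rcases hX1 with hT | hI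
            · exfalso
              apply heT
              rw [SimpleGraph.mem_edgeFinset]
              exact (SimpleGraph.mem_edgeSet T).2 hT
            · exact ((SimpleGraph.fromEdgeSet_adj _).1 hI).1
        apply Finset.Subset.antisymm
        · intro e he; exact key F F' hF hF' hXeq e he
        · intro e he; exact key F' F hF' hF hXeq.symm e he
      simp [hFF]
    calc (A.filter (fun p => Φ p = HH)).card ≤ _ := hstep
      _ ≤ n * ∏ i, (if i.val = 0 then 1 else G.degree (o (par i))) := hcount
      _ = B := by rw [hB, hD]
  have hmain : A.card ≤ B * (A.image Φ).card := Finset.card_le_mul_card_image A B hfiber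
  -- image is contained in the target set
  haveI : Finite (SimpleGraph (Fin n)) :=
    Finite.of_injective (fun H : SimpleGraph (Fin n) => H.Adj)
      (fun H H' h => SimpleGraph.ext h)
  have hNle : (A.image Φ).card ≤ Sset.ncard := by
    have hsub : ((A.image Φ : Finset (SimpleGraph (Fin n))) : Set (SimpleGraph (Fin n))) ⊆ Sset := by
      intro H hH
      simp only [Finset.coe_image, Set.mem_image, Finset.mem_coe] at hH
      obtain ⟨p, hp, rfl⟩ := hH
      exact himg p hp
    calc (A.image Φ).card
        = ((A.image Φ : Finset (SimpleGraph (Fin n))) : Set (SimpleGraph (Fin n))).ncard :=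
          (Set.ncard_coe_finset _).symm
      _ ≤ Sset.ncard := Set.ncard_le_ncard hsub (Set.toFinite _)
  -- positivity of B
  have hBpos : 0 < B := by
    rw [hB]
    apply Nat.mul_pos npos
    apply Finset.prod_pos
    intro i _
    rw [hD]
    dsimp only
    split
    · norm_num
    · exact lt_of_lt_of_le dpos (hdegG _)
  -- the core real inequality
  have hprodsplit : ∏ i, D i = ∏ i ∈ Finset.univ.erase i0, G.degree (o (par i)) := by
    rw [← Finset.prod_erase_mul Finset.univ D (Finset.mem_univ i0)]
    have h1 : D i0 = 1 := by simp [hD, hi0]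
    rw [h1, mul_one]
    apply Finset.prod_congr rfl
    intro i hi
    have h2 : i.val ≠ 0 := by
      intro h
      exact (Finset.mem_erase.1 hi).1 (Fin.ext h)
    rw [hD]
    exact if_neg h2
  have hcard_erase : (Finset.univ.erase i0).card = n - 1 := by
    rw [Finset.card_erase_of_mem (Finset.mem_univ _), Finset.card_univ, Fintype.card_fin]
  have hsum : ∑ i ∈ Finset.univ.erase i0, G.degree (o (par i)) ≤ d * (2 * m) := by
    have hfib := Finset.sum_fiberwise' (Finset.univ.erase i0)
      (fun i => o (par i)) (fun w => G.degree w)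
    rw [← hfib]
    have hcardfil : ∀ w : V,
        ((Finset.univ.erase i0).filter (fun i => o (par i) = w)).card ≤ d := by
      intro w
      have hle : ((Finset.univ.erase i0).filter (fun i => o (par i) = w)).card ≤
          (T.neighborFinset w).card := by
        apply Finset.card_le_card_of_injOn (fun i => o i)
        · intro i hi
          rw [Finset.mem_coe, Finset.mem_filter, Finset.mem_erase] at hi
          obtain ⟨⟨hi1, _⟩, hi2⟩ := hi
          have hiv : i.val ≠ 0 := by
            intro h
            exact hi1 (Fin.ext h)
          have := (hpar i hiv).2
          rw [hi2] at this
          rw [Finset.mem_coe, SimpleGraph.mem_neighborFinset]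
          exact this
        · intro a _ b _ hab
          exact o.injective hab
      calc ((Finset.univ.erase i0).filter (fun i => o (par i) = w)).card
          ≤ (T.neighborFinset w).card := hle
        _ = T.degree w := rfl
        _ ≤ d := hdegT w
    calc ∑ j : V, ∑ _i ∈ (Finset.univ.erase i0).filter (fun i => o (par i) = j), G.degree j
        = ∑ j : V, ((Finset.univ.erase i0).filter (fun i => o (par i) = j)).card * G.degree j := by
          apply Finset.sum_congr rfl
          intro j _
          rw [Finset.sum_const, smul_eq_mul]
      _ ≤ ∑ j : V, d * G.degree j := by
          apply Finset.sum_le_sum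
          intro j _
          exact Nat.mul_le_mul_right _ (hcardfil j)
      _ = d * ∑ j : V, G.degree j := by rw [Finset.mul_sum]
      _ = d * (2 * m) := by rw [G.sum_degrees_eq_twice_card_edges]
  have hd12 : (0:ℝ) < 12 * (d:ℝ) := by
    have : (0:ℝ) < (d:ℝ) := by exact_mod_cast dpos
    linarith
  have hBreal : (B:ℝ) ≤ (n:ℝ) * ((12*(d:ℝ)) ^ ((n-1:ℕ)) * 2 ^ ((m:ℝ)/6)) := by
    rw [hB]
    push_cast
    apply mul_le_mul_of_nonneg_left _ (by positivity : (0:ℝ) ≤ (n:ℝ))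
    have hc1 : (∏ i, (D i : ℝ)) = ∏ i ∈ Finset.univ.erase i0, (G.degree (o (par i)) : ℝ) := by
      rw [← Nat.cast_prod, hprodsplit, Nat.cast_prod]
    rw [hc1]
    calc ∏ i ∈ Finset.univ.erase i0, (G.degree (o (par i)) : ℝ)
        ≤ ∏ i ∈ Finset.univ.erase i0,
            ((12*(d:ℝ)) * 2 ^ ((G.degree (o (par i)) : ℝ)/(12*(d:ℝ)))) := by
          apply Finset.prod_le_prod
          · intro i _; positivity
          · intro i _
            exact nat_le_K_mul_two_rpow _ hd12
      _ = (12*(d:ℝ)) ^ ((n-1:ℕ)) *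
            ∏ i ∈ Finset.univ.erase i0, (2:ℝ) ^ ((G.degree (o (par i)) : ℝ)/(12*(d:ℝ))) := by
          rw [Finset.prod_mul_distrib, Finset.prod_const, hcard_erase]
      _ ≤ (12*(d:ℝ)) ^ ((n-1:ℕ)) * 2 ^ ((m:ℝ)/6) := by
          apply mul_le_mul_of_nonneg_left _ (by positivity)
          rw [← two_rpow_sum]
          apply Real.rpow_le_rpow_of_exponent_le (by norm_num)
          rw [← Finset.sum_div]
          rw [div_le_iff₀ hd12]
          have hsum' : (∑ i ∈ Finset.univ.erase i0, (G.degree (o (par i)) : ℝ)) ≤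
              (d:ℝ) * (2 * (m:ℝ)) := by
            have := hsum
            push_cast [← Nat.cast_sum] at this ⊢
            exact_mod_cast this
          calc (∑ i ∈ Finset.univ.erase i0, (G.degree (o (par i)) : ℝ))
              ≤ (d:ℝ) * (2 * (m:ℝ)) := hsum'
            _ = (m:ℝ)/6 * (12 * (d:ℝ)) := by ring
  have hcore : (2:ℝ) ^ ((n * d : ℝ) / 3) * (B:ℝ) ≤ 2 ^ ((R.card : ℝ)) := by
    have hk : ((n-1:ℕ):ℝ) ≤ (n:ℝ) := by
      have : (n-1:ℕ) ≤ n := Nat.sub_le n 1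
      exact_mod_cast this
    have hn2 : (n:ℝ) ≤ (2:ℝ) ^ ((n:ℝ)) := by
      have h1 : (n:ℝ) ≤ ((2:ℕ):ℝ) ^ (n:ℕ) := by
        exact_mod_cast (Nat.lt_two_pow_self (n := n)).le
      rw [← Real.rpow_natCast ((2:ℕ):ℝ) n] at h1
      exact_mod_cast h1
    have hP : (0:ℝ) ≤ (12*(d:ℝ)) ^ ((n-1:ℕ)) * 2 ^ ((m:ℝ)/6) := by positivity
    have hPle : (12*(d:ℝ)) ^ ((n-1:ℕ)) * 2 ^ ((m:ℝ)/6) ≤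
        (12*(d:ℝ)) ^ ((n:ℝ)) * 2 ^ ((m:ℝ)/6) := by
      apply mul_le_mul_of_nonneg_right _ (by positivity)
      rw [← Real.rpow_natCast (12*(d:ℝ)) (n-1)]
      apply Real.rpow_le_rpow_of_exponent_le _ hk
      have : (1:ℝ) ≤ (d:ℝ) := by exact_mod_cast dpos
      linarith
    have hndr : (n:ℝ) * (d:ℝ) ≤ 2 * (m:ℝ) := by exact_mod_cast hnd2m
    have hfin := numeric_final (n := (n:ℝ)) (d := (d:ℝ)) (m := (m:ℝ)) (k := ((n-1:ℕ):ℝ))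
      (by exact_mod_cast npos) (by positivity) hk hndr hn2 (fortyeight_le hd)
      (by positivity) hP hPle
    have hRreal : ((R.card : ℕ):ℝ) = (m:ℝ) - ((n-1:ℕ):ℝ) := by
      have := hRcard
      have h2 : ((R.card : ℕ):ℝ) + ((n-1:ℕ):ℝ) = (m:ℝ) := by exact_mod_cast this
      linarith
    rw [hRreal]
    calc (2:ℝ) ^ ((n * d : ℝ) / 3) * (B:ℝ)
        ≤ (2:ℝ) ^ ((n * d : ℝ) / 3) *
            ((n:ℝ) * ((12*(d:ℝ)) ^ ((n-1:ℕ)) * 2 ^ ((m:ℝ)/6))) := by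
          apply mul_le_mul_of_nonneg_left hBreal (by positivity)
      _ ≤ 2 ^ ((m:ℝ) - ((n-1:ℕ):ℝ)) := by
          have : (n * d : ℝ) / 3 = (n:ℝ) * (d:ℝ) / 3 := by push_cast; ring
          rw [this]
          exact hfin
  -- conclusion
  have himgreal : ((n.factorial : ℝ) * 2 ^ ((n * d : ℝ) / 3)) * B ≤ ((A.image Φ).card : ℝ) * B := by
    calc ((n.factorial : ℝ) * 2 ^ ((n * d : ℝ) / 3)) * B
        = (n.factorial : ℝ) * ((2:ℝ) ^ ((n * d : ℝ) / 3) * B) := by ring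
      _ ≤ (n.factorial : ℝ) * 2 ^ ((R.card : ℝ)) := by
          apply mul_le_mul_of_nonneg_left hcore (by positivity)
      _ = (A.card : ℝ) := by
          rw [hAcard]
          push_cast
          rw [Real.rpow_natCast]
      _ ≤ ((B : ℝ)) * ((A.image Φ).card : ℝ) := by exact_mod_cast hmain
      _ = ((A.image Φ).card : ℝ) * B := by ring
  have h1 : (n.factorial : ℝ) * 2 ^ ((n * d : ℝ) / 3) ≤ ((A.image Φ).card : ℝ) :=
    le_of_mul_le_mul_right himgreal (by exact_mod_cast hBpos)
  calc (n.factorial : ℝ) * 2 ^ ((n * d : ℝ) / 3) ≤ ((A.image Φ).card : ℝ) := h1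
    _ ≤ (Sset.ncard : ℝ) := by exact_mod_cast hNle
end

section
/- Let f : ℝ₊ → ℝ₊ be non-decreasing and let 𝒳 be a monotone class of graphs with |𝒳ₙ| ≤ 2^{C·n·f(n)} for all n, for some constant C ≥ 1. Then every n-vertex graph in 𝒳 has at most C·n·f(n) edges, and every n-vertex graph in 𝒳 is 2C·f(n)-degenerate (every subgraph of it has a vertex of degree at most 2C·f(n)). -/
open Real

lemma pow_edge_le_ncard {n : ℕ} (G : SimpleGraph (Fin n)) (X : Set (SimpleGraph (Fin n)))
    (hmem : ∀ s : Set (Sym2 (Fin n)), s ⊆ G.edgeSet → SimpleGraph.fromEdgeSet s ∈ X) :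
    2 ^ G.edgeSet.ncard ≤ X.ncard := by
  classical
  haveI : DecidableRel G.Adj := Classical.decRel _
  rw [Set.ncard_eq_toFinset_card' X, Set.ncard_eq_toFinset_card']
  have hEfin : G.edgeSet.toFinset = G.edgeFinset := rfl
  rw [hEfin, ← Finset.card_powerset]
  refine Finset.card_le_card_of_injOn (fun s => SimpleGraph.fromEdgeSet ↑s) ?_ ?_
  · intro s hs
    simp only [Finset.coe_powerset, Set.mem_preimage, Finset.mem_coe, Finset.mem_powerset] at hs
    rw [Finset.mem_coe, Set.mem_toFinset]
    exact hmem ↑s (by intro e he; exact SimpleGraph.mem_edgeFinset.mp (hs he))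
  · intro s hs t ht hst
    simp only [Finset.coe_powerset, Set.mem_preimage, Finset.mem_coe, Finset.mem_powerset] at hs ht
    have key : ∀ u : Finset (Sym2 (Fin n)), u ⊆ G.edgeFinset →
        (SimpleGraph.fromEdgeSet (↑u : Set (Sym2 (Fin n)))).edgeSet = ↑u := by
      intro u hu
      rw [SimpleGraph.edgeSet_fromEdgeSet]
      ext e
      simp only [Set.mem_diff, Finset.mem_coe, Set.mem_setOf_eq, and_iff_left_iff_imp]
      intro he
      exact G.not_isDiag_of_mem_edgeSet (SimpleGraph.mem_edgeFinset.mp (hu he))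
    have := congrArg SimpleGraph.edgeSet hst
    rw [key s hs, key t ht] at this
    exact Finset.coe_injective this

/-- Let `f : ℝ₊ → ℝ₊` be non-decreasing and `𝒳` a monotone class with
`|𝒳ₙ| ≤ 2 ^ (C * n * f n)` for all `n`, for some constant `C ≥ 1`. Then every `n`-vertex
graph in `𝒳` has at most `C * n * f n` edges and is `2 * C * f n`-degenerate: every
nonempty vertex subset `A` contains a vertex with at most `2 * C * f n` neighbours in
`A`. -/
theorem monotone_speed_edges_degeneracy (f : ℝ → ℝ)
    (hf0 : ∀ x : ℝ, 0 ≤ x → 0 ≤ f x)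
    (hfmono : ∀ x y : ℝ, 0 ≤ x → x ≤ y → f x ≤ f y)
    (C : ℝ) (hC : 1 ≤ C) (𝒳 : GraphClass) (hmono : MonotoneGraphClass 𝒳)
    (hspeed : ∀ n : ℕ, ((𝒳 n).ncard : ℝ) ≤ (2 : ℝ) ^ (C * n * f n)) :
    ∀ n : ℕ, ∀ G ∈ 𝒳 n,
      ((G.edgeSet.ncard : ℝ) ≤ C * n * f n) ∧
      ∀ A : Finset (Fin n), A.Nonempty →
        ∃ v ∈ A, (((A : Set (Fin n)) ∩ G.neighborSet v).ncard : ℝ) ≤ 2 * C * f n := by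
  classical
  have edgeB : ∀ n : ℕ, ∀ G ∈ 𝒳 n, ((G.edgeSet.ncard : ℝ) ≤ C * n * f n) := by
    intro n G hG
    have hmem : ∀ s : Set (Sym2 (Fin n)), s ⊆ G.edgeSet → SimpleGraph.fromEdgeSet s ∈ 𝒳 n := by
      intro s hs
      refine hmono _ G hG ⟨Function.Embedding.refl _, ?_⟩
      intro u v huv
      rw [SimpleGraph.fromEdgeSet_adj] at huv
      exact hs huv.1
    have h1 := pow_edge_le_ncard G (𝒳 n) hmem
    have h2 : (2:ℝ) ^ ((G.edgeSet.ncard : ℕ) : ℝ) ≤ (2:ℝ) ^ (C * n * f n) := by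
      calc (2:ℝ) ^ ((G.edgeSet.ncard : ℕ) : ℝ) = ((2 ^ G.edgeSet.ncard : ℕ) : ℝ) := by
            rw [Real.rpow_natCast]; push_cast; ring
        _ ≤ ((𝒳 n).ncard : ℝ) := by exact_mod_cast h1
        _ ≤ _ := hspeed n
    exact (Real.rpow_le_rpow_left_iff (by norm_num)).mp h2
  intro n G hG
  refine ⟨edgeB n G hG, ?_⟩
  intro A hA
  set a := A.card with ha
  have ha0 : 0 < a := Finset.card_pos.mpr hA
  let e : {x // x ∈ A} ≃ Fin a := A.equivFin
  let φ : Fin a → Fin n := fun i => ((e.symm i : A) : Fin n)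
  have hφinj : Function.Injective φ := fun i j hij =>
    e.symm.injective (Subtype.val_injective hij)
  let H : SimpleGraph (Fin a) := G.comap φ
  have hH : H ∈ 𝒳 a := hmono H G hG ⟨⟨φ, hφinj⟩, fun u v h => h⟩
  have han : (a : ℝ) ≤ (n : ℝ) := by
    exact_mod_cast (Finset.card_le_card (Finset.subset_univ A)).trans_eq (by simp)
  have hfa : f a ≤ f n := hfmono a n (by positivity) han
  have hC0 : 0 ≤ C := le_trans zero_le_one hC
  have hHedge : ((H.edgeSet.ncard : ℝ)) ≤ C * a * f n := by
    refine (edgeB a H hH).trans ?_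
    have : (0:ℝ) ≤ C * a := by positivity
    nlinarith [hf0 (a:ℝ) (by positivity)]
  haveI : DecidableRel H.Adj := Classical.decRel _
  obtain ⟨i, -, hi⟩ := Finset.exists_min_image Finset.univ (fun i => H.degree i)
    ⟨⟨0, ha0⟩, Finset.mem_univ _⟩
  have hsum : ∑ j, H.degree j = 2 * H.edgeFinset.card :=
    SimpleGraph.sum_degrees_eq_twice_card_edges H
  have hcardsum : a * H.degree i ≤ ∑ j, H.degree j := by
    calc a * H.degree i = Finset.univ.card • H.degree i := by
          simp [Finset.card_univ]
      _ ≤ ∑ j, H.degree j := Finset.card_nsmul_le_sum _ _ _ (fun j _ => hi j (Finset.mem_univ j))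
  have hedgecard : H.edgeFinset.card = H.edgeSet.ncard := by
    exact (Set.ncard_coe_finset _).symm.trans (by rw [SimpleGraph.coe_edgeFinset])
  have hdeg : ((H.degree i : ℕ) : ℝ) ≤ 2 * C * f n := by
    have h1 : (a : ℝ) * (H.degree i) ≤ 2 * (C * a * f n) := by
      have hnat : a * H.degree i ≤ 2 * H.edgeSet.ncard := by
        rw [← hedgecard]; exact hcardsum.trans hsum.le
      have hcast : (a : ℝ) * (H.degree i) ≤ 2 * (H.edgeSet.ncard : ℝ) := by
        exact_mod_cast hnat
      nlinarith [hHedge]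
    have h2 : (a : ℝ) * (H.degree i) ≤ (a : ℝ) * (2 * C * f n) := by nlinarith
    exact le_of_mul_le_mul_left h2 (by exact_mod_cast ha0)
  refine ⟨φ i, (e.symm i).2, ?_⟩
  have himg : (A : Set (Fin n)) ∩ G.neighborSet (φ i) = φ '' (H.neighborSet i) := by
    ext u
    constructor
    · rintro ⟨huA, hadj⟩
      refine ⟨e ⟨u, huA⟩, ?_, ?_⟩
      · show G.Adj (φ i) (φ (e ⟨u, huA⟩))
        have : φ (e ⟨u, huA⟩) = u := by simp [φ]
        rw [this]; exact hadj
      · simp [φ]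
    · rintro ⟨j, hj, rfl⟩
      exact ⟨(e.symm j).2, hj⟩
  rw [himg, Set.ncard_image_of_injective _ hφinj]
  have : (H.neighborSet i).ncard = H.degree i := by
    rw [Set.ncard_eq_toFinset_card', Set.toFinset_card]
    convert H.card_neighborSet_eq_degree i
  rw [this]
  exact hdeg
end
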